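/- Let G : ℝ → ℝ be differentiable and M-strongly convex for some M > 0 (so that its derivative G' is continuous, strictly increasing, and a bijection from ℝ onto ℝ), and let λ > 0 and c ∈ ℝ. Then the function t ↦ t·c − λ·G(t) attains its maximum over [0,∞) at a unique point, and this unique maximizer equals max(0, (G')⁻¹(c/λ)), where (G')⁻¹ denotes the inverse function of G'. (Proposition 4.1, closed-form global optimizer.) -/

import Mathlib

/-- Proposition 4.1, closed-form global optimizer. -/
theorem stmt_11
    (G : ℝ → ℝ) (M : ℝ) (hM : 0 < M)
    (hdiff : Differentiable ℝ G)
    (hconv : ConvexOn ℝ Set.univ (fun x => G x - M / 2 * x ^ 2))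
    (lam c : ℝ) (hlam : 0 < lam) :
    IsMaxOn (fun t => t * c - lam * G t) (Set.Ici 0)
        (max 0 (Function.invFun (deriv G) (c / lam)))
      ∧ ∀ t ∈ Set.Ici (0 : ℝ),
          IsMaxOn (fun t => t * c - lam * G t) (Set.Ici 0) t →
          t = max 0 (Function.invFun (deriv G) (c / lam)) := by
  set φ := deriv G with hφdef
  set y₀ := c / lam with hy₀
  -- derivative of the auxiliary convex function
  have hHd : ∀ x : ℝ, deriv (fun x => G x - M / 2 * x ^ 2) x = φ x - M * x := by
    intro x
    have h1 : HasDerivAt (fun x : ℝ => G x - M / 2 * x ^ 2) (φ x - M * x) x := by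
      have h2 : HasDerivAt (fun x : ℝ => M / 2 * x ^ 2) (M * x) x := by
        have : HasDerivAt (fun x : ℝ => M / 2 * x ^ 2) (M / 2 * (((2 : ℕ) : ℝ) * x ^ (2 - 1))) x :=
          (hasDerivAt_pow 2 x).const_mul (M / 2)
        convert this using 1
        ring
      exact ((hdiff x).hasDerivAt).sub h2
    exact h1.deriv
  -- monotone derivative of the auxiliary function
  have hmono : Monotone (fun x => φ x - M * x) := by
    have h1 := hconv.monotoneOn_deriv (fun x _ => by
      exact (hdiff x).sub (((hasDerivAt_pow 2 x).const_mul (M / 2)).differentiableAt))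
    intro a b hab
    have := h1 (by simp) (by simp) hab
    simpa [hHd] using this
  -- φ is strictly monotone
  have hsm : StrictMono φ := by
    intro a b hab
    have h := hmono hab.le
    dsimp only at h
    nlinarith [h, mul_pos hM (sub_pos.mpr hab)]
  -- growth bounds
  have hgrow : ∀ x : ℝ, φ 0 + M * x ≤ φ x ∨ φ x ≤ φ 0 + M * x := by
    intro x; rcases le_total 0 x with h | h
    · left; have := hmono h; simp at this; linarith
    · right; have := hmono h; simp at this; linarith
  -- find a, b with φ a < y₀ < φ b
  obtain ⟨a, ha, haφ⟩ : ∃ a : ℝ, a ≤ -1 ∧ φ a < y₀ := by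
    refine ⟨min (-1) ((y₀ - φ 0 - 1) / M), min_le_left _ _, ?_⟩
    set a := min (-1) ((y₀ - φ 0 - 1) / M) with hadef
    have ha0 : a ≤ 0 := le_trans (min_le_left _ _) (by norm_num)
    have h1 := hmono ha0
    simp only [mul_zero, sub_zero] at h1
    have h2 : a ≤ (y₀ - φ 0 - 1) / M := min_le_right _ _
    have h3 : M * a ≤ y₀ - φ 0 - 1 := by
      calc M * a ≤ M * ((y₀ - φ 0 - 1) / M) := mul_le_mul_of_nonneg_left h2 hM.le
        _ = y₀ - φ 0 - 1 := by field_simp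
    linarith
  obtain ⟨b, hb, hbφ⟩ : ∃ b : ℝ, 1 ≤ b ∧ y₀ < φ b := by
    refine ⟨max 1 ((y₀ - φ 0 + 1) / M), le_max_left _ _, ?_⟩
    set b := max 1 ((y₀ - φ 0 + 1) / M) with hbdef
    have hb0 : (0 : ℝ) ≤ b := le_trans (by norm_num) (le_max_left _ _)
    have h1 := hmono hb0
    simp only [mul_zero, sub_zero] at h1
    have h2 : (y₀ - φ 0 + 1) / M ≤ b := le_max_right _ _
    have h3 : y₀ - φ 0 + 1 ≤ M * b := by
      rw [div_le_iff₀' hM] at h2; linarith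
    linarith
  -- Darboux: φ attains y₀
  have hab : a ≤ b := by linarith
  obtain ⟨x₀, -, hx₀⟩ : y₀ ∈ φ '' Set.Ioo a b := by
    refine exists_hasDerivWithinAt_eq_of_gt_of_lt hab
      (fun x _ => ((hdiff x).hasDerivAt).hasDerivWithinAt) haφ hbφ
  -- the inverse value
  have hinj : Function.Injective φ := hsm.injective
  have hinveq : φ (Function.invFun φ y₀) = y₀ := Function.invFun_eq ⟨x₀, hx₀⟩
  set z := Function.invFun φ y₀ with hzdef
  set t₀ := max 0 z with ht₀def
  have ht₀mem : t₀ ∈ Set.Ici (0 : ℝ) := Set.mem_Ici.mpr (le_max_left _ _)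
  have hφt₀ : y₀ ≤ φ t₀ := by
    rcases le_or_gt z 0 with h | h
    · have : t₀ = 0 := max_eq_left h
      rw [this]
      rcases h.eq_or_lt with h' | h'
      · rw [← h', hinveq]
      · exact (hinveq ▸ (hsm h')).le
    · have : t₀ = z := max_eq_right h.le
      rw [this, hinveq]
  -- derivative of f
  have hfd : ∀ t : ℝ, HasDerivAt (fun t => t * c - lam * G t) (c - lam * φ t) t := by
    intro t
    exact (hasDerivAt_mul_const c).sub (((hdiff t).hasDerivAt).const_mul lam)
  have hfderiv : ∀ t : ℝ, deriv (fun t => t * c - lam * G t) t = c - lam * φ t :=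
    fun t => (hfd t).deriv
  have hfcont : Continuous (fun t : ℝ => t * c - lam * G t) :=
    (continuous_id.mul continuous_const).sub (continuous_const.mul hdiff.continuous)
  have hcy : c = lam * y₀ := by rw [hy₀]; field_simp [hlam.ne']
  -- key strict inequality
  have key : ∀ s ∈ Set.Ici (0 : ℝ), s ≠ t₀ →
      (fun t => t * c - lam * G t) s < (fun t => t * c - lam * G t) t₀ := by
    intro s hs hne
    rcases lt_or_gt_of_ne hne with hlt | hgt
    · -- s < t₀, so t₀ > 0 hence t₀ = z and φ t₀ = y₀
      have ht₀pos : 0 < t₀ := lt_of_le_of_lt hs hlt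
      have hz : t₀ = z := by
        rcases le_or_gt z 0 with h | h
        · exfalso; rw [ht₀def, max_eq_left h] at ht₀pos; exact lt_irrefl _ ht₀pos
        · exact max_eq_right h.le
      have hφeq : φ t₀ = y₀ := by rw [hz, hinveq]
      have hmonoF : StrictMonoOn (fun t => t * c - lam * G t) (Set.Icc 0 t₀) := by
        apply strictMonoOn_of_deriv_pos (convex_Icc 0 t₀) hfcont.continuousOn
        intro t ht
        rw [interior_Icc] at ht
        rw [hfderiv]
        have : φ t < y₀ := hφeq ▸ hsm ht.2
        nlinarith [this]
      exact hmonoF ⟨hs, hlt.le⟩ ⟨le_of_lt ht₀pos, le_refl _⟩ hlt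
    · -- s > t₀
      have hantiF : StrictAntiOn (fun t => t * c - lam * G t) (Set.Ici t₀) := by
        apply strictAntiOn_of_deriv_neg (convex_Ici t₀) hfcont.continuousOn
        intro t ht
        rw [interior_Ici] at ht
        rw [hfderiv]
        have : y₀ < φ t := lt_of_le_of_lt hφt₀ (hsm ht)
        nlinarith [this]
      exact hantiF (Set.mem_Ici.mpr le_rfl) (Set.mem_Ici.mpr hgt.le) hgt
  constructor
  · intro s hs
    by_cases h : s = t₀
    · subst h; exact Set.mem_setOf.mpr le_rfl
    · exact (key s hs h).le
  · intro t ht hmax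
    by_contra h
    have h1 := key t ht h
    have h2 := hmax ht₀mem
    simp only [Set.mem_setOf_eq] at h2
    dsimp only at h1
    linarith
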